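/- arXiv:2505.10058 — 3 statements merged into one kernel-verified Lean document; each statement's English description precedes it below -/
import Mathlib

section
/- Let d ≥ 1, σ ≥ 0, λ₀ > 0 and δ ∈ (0,1). There exist constants θ₂ > 0 and C₀ > 0, depending only on λ₀, δ and σ, such that for all k, ℓ ∈ ℤ^d and all 0 ≤ s ≤ t: C_{k,ℓ}(t,s) ≤ C₀ (t−s) e^{−2θ₂ |k|(t−s)/⟨t⟩^{δ}} · min{⟨kt−ℓs⟩, ⟨ℓs⟩}^{−σ}. -/
open MeasureTheory
open scoped ENNReal

noncomputable section

/-- `ℝ^d` with the Euclidean norm. -/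
abbrev Ed (d : ℕ) := EuclideanSpace ℝ (Fin d)

/-- Embedding of `ℤ^d` into `ℝ^d`. -/
def toE {d : ℕ} (k : Fin d → ℤ) : Ed d := WithLp.toLp 2 (fun i => (k i : ℝ))

/-- Japanese bracket of a scalar: `⟨u⟩ = (1+u²)^{1/2}`. -/
def jap (u : ℝ) : ℝ := Real.sqrt (1 + u ^ 2)

/-- Japanese bracket of a vector: `⟨η⟩ = (1+|η|²)^{1/2}`. -/
def japV {d : ℕ} (η : Ed d) : ℝ := Real.sqrt (1 + ‖η‖ ^ 2)

/-- Joint bracket `⟨k,η⟩ = (1+|k|²+|η|²)^{1/2}`. -/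
def japKV {d : ℕ} (k : Fin d → ℤ) (η : Ed d) : ℝ := Real.sqrt (1 + ‖toE k‖ ^ 2 + ‖η‖ ^ 2)

/-- The analytic weight `A_{k,η}(z) = e^{z⟨k,η⟩} ⟨η⟩^σ`. -/
def wA (d : ℕ) (σ z : ℝ) (k : Fin d → ℤ) (η : Ed d) : ℝ :=
  Real.exp (z * japKV k η) * japV η ^ σ

/-- The time-dependent analyticity radius `λ(t) = λ₀(1+(1+t)^{-δ})`. -/
def lam (lam0 δ t : ℝ) : ℝ := lam0 * (1 + (1 + t) ^ (-δ))

/-- The echo kernel `C_{k,ℓ}(t,s) = (t-s) A_{k,kt}(λ(t)) / (A_{ℓ,ℓs}(λ(s)) A_{k-ℓ,kt-ℓs}(λ(s)))`. -/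
def Ckl (d : ℕ) (σ lam0 δ : ℝ) (k ℓ : Fin d → ℤ) (t s : ℝ) : ℝ :=
  (t - s) * wA d σ (lam lam0 δ t) k (t • toE k) /
    (wA d σ (lam lam0 δ s) ℓ (s • toE ℓ) * wA d σ (lam lam0 δ s) (k - ℓ) (t • toE k - s • toE ℓ))

lemma sqrt_aux {S a b : ℝ} (ha : 0 ≤ a) (hb : 0 ≤ b) (hS : S ≤ (a+b)^2) :
    Real.sqrt (1+S) ≤ Real.sqrt (1+a^2) + Real.sqrt (1+b^2) := by
  set A := Real.sqrt (1+a^2) with hA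
  set B := Real.sqrt (1+b^2) with hB
  have hA0 : 0 ≤ A := Real.sqrt_nonneg _
  have hB0 : 0 ≤ B := Real.sqrt_nonneg _
  have hA2 : A^2 = 1+a^2 := Real.sq_sqrt (by positivity)
  have hB2 : B^2 = 1+b^2 := Real.sq_sqrt (by positivity)
  have haA : a ≤ A := by
    rw [hA]
    calc a = Real.sqrt (a^2) := (Real.sqrt_sq ha).symm
      _ ≤ Real.sqrt (1+a^2) := Real.sqrt_le_sqrt (by linarith)
  have hbB : b ≤ B := by
    rw [hB]
    calc b = Real.sqrt (b^2) := (Real.sqrt_sq hb).symm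
      _ ≤ Real.sqrt (1+b^2) := Real.sqrt_le_sqrt (by linarith)
  have hab : a*b ≤ A*B := mul_le_mul haA hbB hb hA0
  have h1 : 1 + S ≤ (A+B)^2 := by nlinarith
  calc Real.sqrt (1+S) ≤ Real.sqrt ((A+B)^2) := Real.sqrt_le_sqrt h1
    _ = A+B := Real.sqrt_sq (by positivity)

lemma cs2 {p q u v : ℝ} (hp : 0 ≤ p) (hq : 0 ≤ q) (hu : 0 ≤ u) (hv : 0 ≤ v) :
    p*q + u*v ≤ Real.sqrt (p^2+u^2) * Real.sqrt (q^2+v^2) := by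
  have h1 : (p*q+u*v)^2 ≤ (p^2+u^2)*(q^2+v^2) := by nlinarith [sq_nonneg (p*v - u*q)]
  rw [show p*q+u*v = Real.sqrt ((p*q+u*v)^2) from (Real.sqrt_sq (by positivity)).symm,
    ← Real.sqrt_mul (by positivity)]
  exact Real.sqrt_le_sqrt h1


lemma toE_add {d : ℕ} (k₁ k₂ : Fin d → ℤ) : toE (k₁+k₂) = toE k₁ + toE k₂ := by
  ext i
  simp [toE, Pi.add_apply]

lemma japKV_add_le {d : ℕ} (k₁ k₂ : Fin d → ℤ) (x₁ x₂ : Ed d) :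
    japKV (k₁+k₂) (x₁+x₂) ≤ japKV k₁ x₁ + japKV k₂ x₂ := by
  unfold japKV
  rw [toE_add]
  have hp : (0:ℝ) ≤ ‖toE k₁‖ := norm_nonneg _
  have hq : (0:ℝ) ≤ ‖toE k₂‖ := norm_nonneg _
  have hu : (0:ℝ) ≤ ‖x₁‖ := norm_nonneg _
  have hv : (0:ℝ) ≤ ‖x₂‖ := norm_nonneg _
  have hX : ‖toE k₁ + toE k₂‖ ≤ ‖toE k₁‖ + ‖toE k₂‖ := norm_add_le _ _
  have hY : ‖x₁+x₂‖ ≤ ‖x₁‖ + ‖x₂‖ := norm_add_le _ _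
  set a := Real.sqrt (‖toE k₁‖^2+‖x₁‖^2) with hadef
  set b := Real.sqrt (‖toE k₂‖^2+‖x₂‖^2) with hbdef
  have ha0 : 0 ≤ a := Real.sqrt_nonneg _
  have hb0 : 0 ≤ b := Real.sqrt_nonneg _
  have ha2 : a^2 = ‖toE k₁‖^2+‖x₁‖^2 := Real.sq_sqrt (by positivity)
  have hb2 : b^2 = ‖toE k₂‖^2+‖x₂‖^2 := Real.sq_sqrt (by positivity)
  have hab := cs2 hp hq hu hv
  rw [← hadef, ← hbdef] at hab
  have hS : ‖toE k₁+toE k₂‖^2 + ‖x₁+x₂‖^2 ≤ (a+b)^2 := by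
    nlinarith [norm_nonneg (toE k₁+toE k₂), norm_nonneg (x₁+x₂)]
  have h := sqrt_aux ha0 hb0 hS
  rw [ha2, hb2] at h
  calc Real.sqrt (1 + ‖toE k₁+toE k₂‖^2 + ‖x₁+x₂‖^2)
      = Real.sqrt (1 + (‖toE k₁+toE k₂‖^2 + ‖x₁+x₂‖^2)) := by ring_nf
    _ ≤ _ := by
        refine h.trans_eq ?_
        congr 2 <;> ring

lemma japV_add_le {d : ℕ} (x y : Ed d) : japV (x+y) ≤ japV x + japV y := by
  unfold japV
  have h := sqrt_aux (norm_nonneg x) (norm_nonneg y)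
    (show ‖x+y‖^2 ≤ (‖x‖+‖y‖)^2 by
      have := norm_add_le x y
      nlinarith [norm_nonneg (x+y)])
  exact h

lemma one_le_japV {d : ℕ} (x : Ed d) : 1 ≤ japV x := by
  unfold japV
  calc (1:ℝ) = Real.sqrt 1 := Real.sqrt_one.symm
    _ ≤ _ := Real.sqrt_le_sqrt (by nlinarith [sq_nonneg ‖x‖])


lemma drop_ge {δ s t : ℝ} (hδ0 : 0 < δ) (hs : 0 ≤ s) (hst : s ≤ t) :
    δ*(t-s)*(1+t)^(-(1+δ)) ≤ (1+s)^(-(δ:ℝ)) - (1+t)^(-(δ:ℝ)) := by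
  set a : ℝ := 1+s with hadef
  set b : ℝ := 1+t with hbdef
  have ha : (0:ℝ) < a := by simp [hadef]; linarith
  have hb : (0:ℝ) < b := by simp [hbdef]; linarith
  have hab : a ≤ b := by simp [hadef, hbdef]; linarith
  have hr : (0:ℝ) < a/b := div_pos ha hb
  have hlog : Real.log (a/b) ≤ a/b - 1 := Real.log_le_sub_one_of_pos hr
  have hexp : 1 + (-δ * Real.log (a/b)) ≤ Real.exp (-δ * Real.log (a/b)) := by
    have := Real.add_one_le_exp (-δ * Real.log (a/b)); linarith
  have hrpow : (a/b)^(-(δ:ℝ)) = Real.exp (-δ * Real.log (a/b)) := by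
    rw [Real.rpow_def_of_pos hr]; ring_nf
  have h1 : 1 + δ*(1 - a/b) ≤ (a/b)^(-(δ:ℝ)) := by
    rw [hrpow]
    have : 1 + δ*(1-a/b) ≤ 1 + (-δ * Real.log (a/b)) := by nlinarith
    linarith
  have h2 : (a/b)^(-(δ:ℝ)) = a^(-(δ:ℝ)) * b^(δ:ℝ) := by
    rw [Real.div_rpow ha.le hb.le, Real.rpow_neg hb.le]
    field_simp
  have hbδ : (0:ℝ) < b^(-(δ:ℝ)) := Real.rpow_pos_of_pos hb _
  have h3 : (1 + δ*(1-a/b)) * b^(-(δ:ℝ)) ≤ a^(-(δ:ℝ)) := by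
    calc (1 + δ*(1-a/b)) * b^(-(δ:ℝ)) ≤ (a/b)^(-(δ:ℝ)) * b^(-(δ:ℝ)) :=
          mul_le_mul_of_nonneg_right h1 hbδ.le
      _ = a^(-(δ:ℝ)) * (b^(δ:ℝ) * b^(-(δ:ℝ))) := by rw [h2]; ring
      _ = a^(-(δ:ℝ)) := by rw [← Real.rpow_add hb]; simp
  have h4 : b^(-(1+δ)) = b^(-(δ:ℝ)) / b := by
    rw [show -(1+δ) = -δ + (-1:ℝ) by ring, Real.rpow_add hb, Real.rpow_neg_one]
    ring
  have hts : t - s = b - a := by rw [hadef, hbdef]; ring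
  have key : δ*(b-a)*b^(-(1+δ)) = δ*(1-a/b)*b^(-(δ:ℝ)) := by
    rw [h4]; field_simp
  rw [hts, key]
  nlinarith [h3, hbδ]

lemma japKV_ge {d : ℕ} (k : Fin d → ℤ) (t : ℝ) :
    ‖toE k‖ * jap t ≤ japKV k (t • toE k) := by
  unfold japKV jap
  have hn : ‖t • toE k‖^2 = t^2 * ‖toE k‖^2 := by
    rw [norm_smul, Real.norm_eq_abs, mul_pow, sq_abs]
  rw [hn]
  have h : ‖toE k‖ * Real.sqrt (1+t^2) = Real.sqrt (‖toE k‖^2 * (1+t^2)) := by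
    rw [Real.sqrt_mul (by positivity), Real.sqrt_sq (norm_nonneg _)]
  rw [h]
  exact Real.sqrt_le_sqrt (by nlinarith [norm_nonneg (toE k)])

lemma jap_ge {t : ℝ} (ht : 0 ≤ t) : (1+t)/2 ≤ jap t := by
  unfold jap
  calc (1+t)/2 = Real.sqrt (((1+t)/2)^2) := (Real.sqrt_sq (by positivity)).symm
    _ ≤ _ := Real.sqrt_le_sqrt (by nlinarith)

lemma one_le_jap (t : ℝ) : 1 ≤ jap t := by
  unfold jap
  calc (1:ℝ) = Real.sqrt 1 := Real.sqrt_one.symm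
    _ ≤ _ := Real.sqrt_le_sqrt (by nlinarith [sq_nonneg t])

/-- there are `θ₂, C₀ > 0` depending only on `λ₀, δ, σ` such that
`C_{k,ℓ}(t,s) ≤ C₀ (t-s) e^{-2θ₂|k|(t-s)/⟨t⟩^δ} min{⟨kt-ℓs⟩,⟨ℓs⟩}^{-σ}`. -/
theorem Ckl_bound (d : ℕ) (hd : 1 ≤ d) (σ lam0 δ : ℝ) (hσ : 0 ≤ σ)
    (hl : 0 < lam0) (hδ0 : 0 < δ) (hδ1 : δ < 1) :
    ∃ θ₂ > (0:ℝ), ∃ C₀ > (0:ℝ), ∀ (k ℓ : Fin d → ℤ) (s t : ℝ), 0 ≤ s → s ≤ t →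
      Ckl d σ lam0 δ k ℓ t s ≤
        C₀ * (t - s) * Real.exp (-2 * θ₂ * ‖toE k‖ * (t - s) / jap t ^ δ) *
          min (japV (t • toE k - s • toE ℓ)) (japV (s • toE ℓ)) ^ (-σ) := by
  refine ⟨lam0*δ/8, by positivity, (2:ℝ)^σ, Real.rpow_pos_of_pos two_pos σ, ?_⟩
  intro k ℓ s t hs hst
  have ht : 0 ≤ t := hs.trans hst
  simp only [Ckl, wA]
  set θ₂ : ℝ := lam0*δ/8 with hθdef
  set J : ℝ := jap t with hJdef
  have hJ1 : 1 ≤ J := one_le_jap t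
  have hJ0 : 0 < J := lt_of_lt_of_le one_pos hJ1
  set Jd : ℝ := J ^ δ with hJddef
  have hJd : 0 < Jd := Real.rpow_pos_of_pos hJ0 δ
  set K : ℝ := japKV k (t • toE k) with hKdef
  set L : ℝ := japKV ℓ (s • toE ℓ) with hLdef
  set M : ℝ := japKV (k-ℓ) (t • toE k - s • toE ℓ) with hMdef
  set P : ℝ := japV (s • toE ℓ) with hPdef
  set Q : ℝ := japV (t • toE k - s • toE ℓ) with hQdef
  set R : ℝ := japV (t • toE k) with hRdef
  set lt' : ℝ := lam lam0 δ t with hltdef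
  set ls' : ℝ := lam lam0 δ s with hlsdef
  have hK0 : 0 ≤ K := Real.sqrt_nonneg _
  have hP1 : 1 ≤ P := one_le_japV _
  have hQ1 : 1 ≤ Q := one_le_japV _
  have hR0 : 0 ≤ R := Real.sqrt_nonneg _
  have hP0 : 0 < P := lt_of_lt_of_le one_pos hP1
  have hQ0 : 0 < Q := lt_of_lt_of_le one_pos hQ1
  -- triangle inequality for K
  have e1 : ℓ + (k - ℓ) = k := by abel
  have e2 : s • toE ℓ + (t • toE k - s • toE ℓ) = t • toE k := by abel
  have htri : K ≤ L + M := by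
    have h := japKV_add_le ℓ (k-ℓ) (s • toE ℓ) (t • toE k - s • toE ℓ)
    rw [e1, e2] at h
    exact h
  -- lambda facts
  have hrs : (0:ℝ) ≤ (1+s)^(-(δ:ℝ)) := Real.rpow_nonneg (by linarith) _
  have hrt : (0:ℝ) ≤ (1+t)^(-(δ:ℝ)) := Real.rpow_nonneg (by linarith) _
  have hls0 : 0 ≤ ls' := by rw [hlsdef]; unfold lam; nlinarith
  have hlt0 : 0 ≤ lt' := by rw [hltdef]; unfold lam; nlinarith
  have hlam_diff : lam0 * (δ*(t-s)*(1+t)^(-(1+δ))) ≤ ls' - lt' := by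
    have h := mul_le_mul_of_nonneg_left (drop_ge hδ0 hs hst) hl.le
    have he : ls' - lt' = lam0*((1+s)^(-(δ:ℝ)) - (1+t)^(-(δ:ℝ))) := by
      rw [hlsdef, hltdef]; unfold lam; ring
    linarith
  have hdiff0 : 0 ≤ ls' - lt' := by
    have h0 : (0:ℝ) ≤ lam0 * (δ*(t-s)*(1+t)^(-(1+δ))) := by
      have : (0:ℝ) ≤ (1+t)^(-(1+δ)) := Real.rpow_nonneg (by linarith) _
      have hts : 0 ≤ t - s := by linarith
      positivity
    linarith
  -- bound (1+t)^(1+δ) ≤ 4 J^(1+δ)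
  have hB0 : (0:ℝ) < 1+t := by linarith
  have h2J : (1+t) ≤ 2*J := by have := jap_ge ht; rw [← hJdef] at this; linarith
  have hBpow : (1+t)^((1:ℝ)+δ) ≤ 4 * J^((1:ℝ)+δ) := by
    have h24 : (2:ℝ)^((1:ℝ)+δ) ≤ (2:ℝ)^((2:ℕ):ℝ) :=
      Real.rpow_le_rpow_of_exponent_le one_le_two (by push_cast; linarith)
    rw [Real.rpow_natCast] at h24
    norm_num at h24
    calc (1+t)^((1:ℝ)+δ) ≤ (2*J)^((1:ℝ)+δ) := Real.rpow_le_rpow hB0.le h2J (by linarith)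
      _ = 2^((1:ℝ)+δ) * J^((1:ℝ)+δ) := Real.mul_rpow (by norm_num) hJ0.le
      _ ≤ 4 * J^((1:ℝ)+δ) :=
          mul_le_mul_of_nonneg_right h24 (Real.rpow_nonneg hJ0.le _)
  have hJpow : J^((1:ℝ)+δ) = J * Jd := by
    rw [Real.rpow_add hJ0, Real.rpow_one, hJddef]
  have hBinv' : 1/(4*Jd) ≤ (1+t)^(-((1:ℝ)+δ)) * J := by
    have hpos : (0:ℝ) < (1+t)^((1:ℝ)+δ) := Real.rpow_pos_of_pos hB0 _
    have hi : ((4:ℝ)*(J*Jd))⁻¹ ≤ ((1+t)^((1:ℝ)+δ))⁻¹ := by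
      apply inv_anti₀ hpos
      rw [← hJpow]; exact hBpow
    have hneg : (1+t)^(-((1:ℝ)+δ)) = ((1+t)^((1:ℝ)+δ))⁻¹ := by
      rw [← Real.rpow_neg hB0.le]
    rw [hneg]
    calc 1/(4*Jd) = ((4:ℝ)*(J*Jd))⁻¹ * J := by field_simp
      _ ≤ ((1+t)^((1:ℝ)+δ))⁻¹ * J := mul_le_mul_of_nonneg_right hi hJ0.le
  -- key exponent inequality
  have hc0 : 0 ≤ lam0*δ*(t-s)*‖toE k‖ := by
    have : (0:ℝ) ≤ t - s := by linarith
    positivity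
  have hX : 2*θ₂*‖toE k‖*(t-s)/Jd ≤ (ls' - lt')*K := by
    have hK_ge : ‖toE k‖ * J ≤ K := by rw [hKdef, hJdef]; exact japKV_ge k t
    have step1 : (lam0*δ*(t-s)*‖toE k‖) * ((1+t)^(-((1:ℝ)+δ)) * J) ≤ (ls' - lt')*K := by
      have hmm : (lam0 * (δ*(t-s)*(1+t)^(-(1+δ)))) * (‖toE k‖*J) ≤ (ls' - lt')*K := by
        apply mul_le_mul hlam_diff hK_ge (by positivity) hdiff0
      calc (lam0*δ*(t-s)*‖toE k‖) * ((1+t)^(-((1:ℝ)+δ)) * J)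
          = (lam0 * (δ*(t-s)*(1+t)^(-(1+δ)))) * (‖toE k‖*J) := by ring
        _ ≤ (ls' - lt')*K := hmm
    have step2 : (lam0*δ*(t-s)*‖toE k‖) * (1/(4*Jd)) ≤
        (lam0*δ*(t-s)*‖toE k‖) * ((1+t)^(-((1:ℝ)+δ)) * J) :=
      mul_le_mul_of_nonneg_left hBinv' hc0
    have heq : 2*θ₂*‖toE k‖*(t-s)/Jd = (lam0*δ*(t-s)*‖toE k‖) * (1/(4*Jd)) := by
      rw [hθdef]; field_simp; ring
    linarith
  have hexpkey : lt'*K - ls'*L - ls'*M ≤ -(2*θ₂*‖toE k‖*(t-s)/Jd) := by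
    have hlsK : ls'*K ≤ ls'*L + ls'*M := by
      have h := mul_le_mul_of_nonneg_left htri hls0
      rw [mul_add] at h
      exact h
    have hre : (ls' - lt')*K = ls'*K - lt'*K := by ring
    linarith
  have hE : Real.exp (lt'*K) ≤
      Real.exp (-(2*θ₂*‖toE k‖*(t-s)/Jd)) * (Real.exp (ls'*L) * Real.exp (ls'*M)) := by
    rw [← Real.exp_add, ← Real.exp_add]
    exact Real.exp_le_exp.2 (by linarith)
  -- power bound
  set m : ℝ := min Q P with hmdef
  have hm1 : 1 ≤ m := le_min hQ1 hP1
  have hm0 : 0 < m := lt_of_lt_of_le one_pos hm1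
  have hRPQ : R ≤ P + Q := by
    have h := japV_add_le (s • toE ℓ) (t • toE k - s • toE ℓ)
    rw [e2] at h
    exact h
  have hmax0 : 0 < max Q P := lt_of_lt_of_le hQ0 (le_max_left _ _)
  have hRmax : R ≤ 2 * max Q P := by
    have h1 : P ≤ max Q P := le_max_right _ _
    have h2 : Q ≤ max Q P := le_max_left _ _
    linarith
  have hmaxeq : max Q P = Q*P/m := by
    rw [eq_div_iff hm0.ne', mul_comm]
    exact min_mul_max Q P
  have hPow : R^σ ≤ (2:ℝ)^σ * m^(-σ) * (P^σ * Q^σ) := by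
    have h1 : R^σ ≤ (2*max Q P)^σ := Real.rpow_le_rpow hR0 hRmax hσ
    have h2 : (2*max Q P)^σ = (2:ℝ)^σ * (max Q P)^σ := Real.mul_rpow (by norm_num) hmax0.le
    have h3 : (max Q P)^σ = Q^σ * P^σ * (m^σ)⁻¹ := by
      rw [hmaxeq, Real.div_rpow (by positivity) hm0.le, Real.mul_rpow hQ0.le hP0.le,
        div_eq_mul_inv]
    have h4 : m^(-σ) = (m^σ)⁻¹ := Real.rpow_neg hm0.le σ
    calc R^σ ≤ (2*max Q P)^σ := h1
      _ = (2:ℝ)^σ * (Q^σ * P^σ * (m^σ)⁻¹) := by rw [h2, h3]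
      _ = (2:ℝ)^σ * m^(-σ) * (P^σ * Q^σ) := by rw [h4]; ring
  -- assemble
  have hD : (0:ℝ) < Real.exp (ls'*L)*P^σ * (Real.exp (ls'*M)*Q^σ) := by
    have := Real.rpow_pos_of_pos hP0 σ
    have := Real.rpow_pos_of_pos hQ0 σ
    positivity
  rw [div_le_iff₀ hD]
  have hEeq : Real.exp (-2*θ₂*‖toE k‖*(t-s)/Jd) = Real.exp (-(2*θ₂*‖toE k‖*(t-s)/Jd)) := by
    ring_nf
  rw [hEeq]
  have hRσ0 : 0 ≤ R^σ := Real.rpow_nonneg hR0 σ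
  have hstep : Real.exp (lt'*K) * R^σ ≤
      (Real.exp (-(2*θ₂*‖toE k‖*(t-s)/Jd)) * (Real.exp (ls'*L) * Real.exp (ls'*M))) *
        ((2:ℝ)^σ * m^(-σ) * (P^σ * Q^σ)) := by
    apply mul_le_mul hE hPow hRσ0 (by positivity)
  calc (t-s) * (Real.exp (lt'*K) * R^σ)
      ≤ (t-s) * ((Real.exp (-(2*θ₂*‖toE k‖*(t-s)/Jd)) * (Real.exp (ls'*L) * Real.exp (ls'*M))) *
        ((2:ℝ)^σ * m^(-σ) * (P^σ * Q^σ))) :=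
        mul_le_mul_of_nonneg_left hstep (by linarith)
    _ = (2:ℝ)^σ * (t-s) * Real.exp (-(2*θ₂*‖toE k‖*(t-s)/Jd)) * m^(-σ) *
        (Real.exp (ls'*L)*P^σ * (Real.exp (ls'*M)*Q^σ)) := by ring
end
end

section
/- Let d ≥ 1 and let k, ℓ ∈ ℤ^d with k ≠ ℓ. Let t ≥ 0 and let s be a real number with t/2 ≤ s ≤ t and |kt − ℓs| ≤ t/4 (Euclidean norm in ℝ^d). Then |k|(t−s) ≥ t/4. -/
open MeasureTheory
open scoped ENNReal

noncomputable section

lemma one_le_norm_sub_toE {d : ℕ} (k ℓ : Fin d → ℤ) (hkl : k ≠ ℓ) :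
    1 ≤ ‖toE k - toE ℓ‖ := by
  obtain ⟨i, hi⟩ := Function.ne_iff.mp hkl
  have h1 : (1 : ℝ) ≤ |(toE k - toE ℓ) i| := by
    have : (toE k - toE ℓ) i = ((k i - ℓ i : ℤ) : ℝ) := by
      simp [toE]
    rw [this, ← Int.cast_abs]
    exact_mod_cast Int.one_le_abs (sub_ne_zero.mpr hi)
  calc (1:ℝ) ≤ |(toE k - toE ℓ) i| := h1
    _ ≤ ‖toE k - toE ℓ‖ := by
        rw [EuclideanSpace.norm_eq]
        refine (Real.le_sqrt (abs_nonneg _) (Finset.sum_nonneg fun j _ => sq_nonneg _)).mpr ?_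
        have := Finset.single_le_sum (f := fun j => |(toE k - toE ℓ) j| ^ 2)
          (fun j _ => sq_nonneg _) (Finset.mem_univ i)
        simpa [sq_abs] using this

/-- if `k ≠ ℓ`, `t/2 ≤ s ≤ t` and `|kt - ℓs| ≤ t/4`, then
`|k|(t-s) ≥ t/4`. -/
theorem echo_resonance_bound (d : ℕ) (hd : 1 ≤ d) (k ℓ : Fin d → ℤ) (hkl : k ≠ ℓ)
    (t : ℝ) (ht : 0 ≤ t) (s : ℝ) (hs1 : t / 2 ≤ s) (hs2 : s ≤ t)
    (hres : ‖t • toE k - s • toE ℓ‖ ≤ t / 4) :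
    ‖toE k‖ * (t - s) ≥ t / 4 := by
  have hts : 0 ≤ t - s := sub_nonneg.mpr hs2
  have hs0 : 0 ≤ s := le_trans (by linarith) hs1
  have key : (t - s) • toE k = (t • toE k - s • toE ℓ) - s • (toE k - toE ℓ) := by
    rw [sub_smul, smul_sub]; abel
  have h1 : ‖(t - s) • toE k‖ = ‖toE k‖ * (t - s) := by
    rw [norm_smul, Real.norm_of_nonneg hts, mul_comm]
  have h2 : s * 1 ≤ ‖s • (toE k - toE ℓ)‖ := by
    rw [norm_smul, Real.norm_of_nonneg hs0]
    exact mul_le_mul_of_nonneg_left (one_le_norm_sub_toE k ℓ hkl) hs0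
  have h3 : ‖s • (toE k - toE ℓ)‖ - ‖t • toE k - s • toE ℓ‖ ≤ ‖(t - s) • toE k‖ := by
    rw [key, norm_sub_rev (t • toE k - s • toE ℓ)]
    exact norm_sub_norm_le (s • (toE k - toE ℓ)) (t • toE k - s • toE ℓ)
  rw [← h1]
  linarith
end
end

section
/- Let d ≥ 1, σ ≥ 0, λ₀ > 0 and δ ∈ (0,1), and set λ(t) = λ₀(1+(1+t)^{−δ}). There exist constants θ₁ > 0 and C > 0, depending only on d, σ, λ₀ and δ, such that the following holds. Let h : ℤ^d × ℝ^d → ℂ be such that h(k,·) is Schwartz for every k, and set ε₀ = Σ_{|α|≤d} Σ_{k∈ℤ^d} ∫_{ℝ^d} A_{k,η}(2λ₀) |∂^α_η h(k,η)| dη, assumed finite. Then for all t ≥ 0: Σ_{k∈ℤ^d∖{0}} |k|^{−1} A_{k,kt}(λ(t)) |h(k,kt)| ≤ C ε₀ e^{−θ₁⟨t⟩}. -/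
open MeasureTheory
open scoped ENNReal

noncomputable section

/-- Partial derivative in the `i`-th coordinate direction. -/
def coordDeriv {d : ℕ} (i : Fin d) (h : Ed d → ℂ) : Ed d → ℂ :=
  fun η => fderiv ℝ h η (EuclideanSpace.single i 1)

/-- Multi-index derivative `∂^α`. -/
def multiDeriv {d : ℕ} (α : Fin d → ℕ) (h : Ed d → ℂ) : Ed d → ℂ :=
  ((List.finRange d).flatMap fun i => List.replicate (α i) i).foldr coordDeriv h

/-- Multi-indices `α` of total order `|α| ≤ d`. -/
def MIdx (d : ℕ) := {α : Fin d → ℕ // ∑ i, α i ≤ d}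

lemma japV_pos {d : ℕ} (η : Ed d) : 0 < japV η :=
  Real.sqrt_pos.2 (by positivity)

lemma wA_pos {d : ℕ} (σ z : ℝ) (k : Fin d → ℤ) (η : Ed d) : 0 < wA d σ z k η := by
  unfold wA
  have := japV_pos η
  positivity

lemma wA_mono {d : ℕ} (σ z : ℝ) (hσ : 0 ≤ σ) (hz : 0 ≤ z) (k : Fin d → ℤ) {η η' : Ed d}
    (h : ‖η‖ ≤ ‖η'‖) : wA d σ z k η ≤ wA d σ z k η' := by
  have h2 : ‖η‖ ^ 2 ≤ ‖η'‖ ^ 2 := pow_le_pow_left₀ (norm_nonneg _) h 2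
  have hkv : japKV k η ≤ japKV k η' := Real.sqrt_le_sqrt (by linarith)
  have hv : japV η ≤ japV η' := Real.sqrt_le_sqrt (by linarith)
  have h1 : Real.exp (z * japKV k η) ≤ Real.exp (z * japKV k η') :=
    Real.exp_le_exp.2 (mul_le_mul_of_nonneg_left hkv hz)
  have h3 : japV η ^ σ ≤ japV η' ^ σ :=
    Real.rpow_le_rpow (japV_pos η).le hv hσ
  exact mul_le_mul h1 h3 (Real.rpow_nonneg (japV_pos η).le σ) (Real.exp_pos _).le

lemma schwartz_decay_bound {d : ℕ} (g : SchwartzMap (Ed d) ℂ) :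
    ∃ C, 0 < C ∧ ∀ y, (1 + ‖y‖ ^ 2) * ‖g y‖ ≤ C := by
  obtain ⟨C0, hC0, h0⟩ := g.decay 0 0
  obtain ⟨C2, hC2, h2⟩ := g.decay 2 0
  refine ⟨C0 + C2, by linarith, fun y => ?_⟩
  have e0 := h0 y
  have e2 := h2 y
  simp only [pow_zero, one_mul, norm_iteratedFDeriv_zero] at e0 e2
  nlinarith [norm_nonneg (g y), sq_nonneg ‖y‖]

lemma line_integrable {d : ℕ} (g : SchwartzMap (Ed d) ℂ) (x v : Ed d) (hv : v ≠ 0) :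
    Integrable (fun u : ℝ => g (x + u • v)) := by
  obtain ⟨C, hC, hdec⟩ := schwartz_decay_bound g
  have hvpos : 0 < ‖v‖ := norm_pos_iff.2 hv
  have hv2 : (0:ℝ) < ‖v‖ ^ 2 := by positivity
  set M : ℝ := (‖v‖ ^ 2 + 2 * ‖x‖ ^ 2 + 2) / ‖v‖ ^ 2 with hM
  have hMpos : 0 < M := by positivity
  have key : ∀ u : ℝ, ‖g (x + u • v)‖ ≤ C * M / (1 + u ^ 2) := by
    intro u
    set y := x + u • v with hy
    have h1 : ‖v‖ * |u| ≤ ‖x‖ + ‖y‖ := by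
      have ha : ‖u • v‖ = ‖y - x‖ := by rw [hy]; congr 1; abel
      have h2 : ‖u • v‖ = |u| * ‖v‖ := by rw [norm_smul, Real.norm_eq_abs]
      have h3 : ‖y - x‖ ≤ ‖y‖ + ‖x‖ := norm_sub_le _ _
      nlinarith
    have hu2 : ‖v‖ ^ 2 * u ^ 2 ≤ 2 * ‖x‖ ^ 2 + 2 * ‖y‖ ^ 2 := by
      nlinarith [sq_abs u, sq_nonneg (‖x‖ - ‖y‖), mul_self_le_mul_self (by positivity : (0:ℝ) ≤ ‖v‖ * |u|) h1]
    have h4 : (1 + u ^ 2) * ‖v‖ ^ 2 ≤ M * (1 + ‖y‖ ^ 2) * ‖v‖ ^ 2 := by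
      have hMv : M * ‖v‖ ^ 2 = ‖v‖ ^ 2 + 2 * ‖x‖ ^ 2 + 2 := by
        rw [hM]; field_simp
      nlinarith [sq_nonneg ‖y‖, norm_nonneg y, sq_nonneg ‖x‖]
    have h4' : (1 + u ^ 2) ≤ M * (1 + ‖y‖ ^ 2) := le_of_mul_le_mul_right (by linarith) hv2
    have h5 : (1 + u ^ 2) * ‖g y‖ ≤ M * C := by
      have := hdec y
      have hgy : 0 ≤ ‖g y‖ := norm_nonneg _
      nlinarith [mul_le_mul_of_nonneg_right h4' hgy]
    rw [le_div_iff₀ (by positivity)]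
    nlinarith
  have hbound : Integrable (fun u : ℝ => C * M / (1 + u ^ 2)) := by
    simpa [div_eq_mul_inv, mul_assoc] using integrable_inv_one_add_sq.const_mul (C * M)
  refine hbound.mono' ?_ (Filter.Eventually.of_forall fun u => ?_)
  · exact (g.continuous.comp (by continuity)).aestronglyMeasurable
  · simpa using key u

lemma line_tendsto_zero {d : ℕ} (g : SchwartzMap (Ed d) ℂ) (x v : Ed d) (hv : v ≠ 0) :
    Filter.Tendsto (fun u : ℝ => g (x + u • v)) Filter.atTop (nhds 0) := by
  obtain ⟨C, hC, hdec⟩ := schwartz_decay_bound g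
  have hvpos : 0 < ‖v‖ := norm_pos_iff.2 hv
  have hnorm : Filter.Tendsto (fun u : ℝ => ‖x + u • v‖) Filter.atTop Filter.atTop := by
    apply Filter.tendsto_atTop_mono' _ (Filter.Eventually.of_forall fun u => ?_)
    · exact Filter.tendsto_atTop_add_const_right _ (-‖x‖)
        (Filter.Tendsto.atTop_mul_const hvpos Filter.tendsto_id)
    · have h1 : ‖x + u • v‖ ≥ ‖u • v‖ - ‖x‖ := by
        have h0 := norm_sub_le (x + u • v) x
        have h2 : ‖x + u • v - x‖ = ‖u • v‖ := by congr 1; abel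
        rw [h2] at h0
        linarith
      have h3 : ‖u • v‖ = |u| * ‖v‖ := by rw [norm_smul, Real.norm_eq_abs]
      have h4 : u * ‖v‖ ≤ |u| * ‖v‖ := mul_le_mul_of_nonneg_right (le_abs_self u) hvpos.le
      have : (fun u : ℝ => u * ‖v‖ + -‖x‖) u ≤ ‖x + u • v‖ := by
        simp only []
        rw [h3] at h1
        linarith
      simpa using this
  have h1 : Filter.Tendsto (fun r : ℝ => 1 + r ^ 2) Filter.atTop Filter.atTop := by
    apply Filter.tendsto_atTop_add_const_left
    exact Filter.tendsto_pow_atTop (by norm_num)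
  have h2 : Filter.Tendsto (fun r : ℝ => (1 + r ^ 2)⁻¹) Filter.atTop (nhds 0) :=
    Filter.Tendsto.inv_tendsto_atTop h1
  have h3 : Filter.Tendsto (fun u : ℝ => C * (1 + ‖x + u • v‖ ^ 2)⁻¹) Filter.atTop (nhds 0) := by
    have := (h2.comp hnorm).const_mul C
    simpa using this
  apply squeeze_zero_norm _ h3
  intro u
  have := hdec (x + u • v)
  have hp : (0:ℝ) < 1 + ‖x + u • v‖ ^ 2 := by positivity
  rw [← div_eq_mul_inv, le_div_iff₀ hp]
  nlinarith [norm_nonneg (g (x + u • v))]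

def SchwartzMap.pderivCLM {d : ℕ} (_K : Type) (m : Ed d) :
    SchwartzMap (Ed d) ℂ →L[ℝ] SchwartzMap (Ed d) ℂ :=
  LineDeriv.lineDerivOpCLM ℝ (SchwartzMap (Ed d) ℂ) m

lemma SchwartzMap.pderivCLM_apply {d : ℕ} (K : Type) (m : Ed d) (f : SchwartzMap (Ed d) ℂ)
    (x : Ed d) : SchwartzMap.pderivCLM K m f x = fderiv ℝ f x m := rfl

lemma ftc_line {d : ℕ} (s : SchwartzMap (Ed d) ℂ) (x v : Ed d) (hv : v ≠ 0) :
    ENNReal.ofReal ‖s x‖ ≤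
      ∫⁻ u in Set.Ioi (0:ℝ), ENNReal.ofReal ‖(SchwartzMap.pderivCLM ℝ v s) (x + u • v)‖ := by
  set g := SchwartzMap.pderivCLM ℝ v s with hg
  have hder : ∀ u : ℝ, HasDerivAt (fun u : ℝ => s (x + u • v)) (g (x + u • v)) u := by
    intro u
    have h1 : HasDerivAt (fun u : ℝ => x + u • v) v u := by
      simpa using ((hasDerivAt_id u).smul_const v).const_add x
    have h2 : HasFDerivAt (⇑s) (fderiv ℝ (⇑s) (x + u • v)) (x + u • v) :=
      (s.differentiable.differentiableAt).hasFDerivAt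
    have := h2.comp_hasDerivAt u h1
    exact this
  have hint : IntegrableOn (fun u : ℝ => g (x + u • v)) (Set.Ioi 0) :=
    (line_integrable g x v hv).integrableOn
  have htend := line_tendsto_zero s x v hv
  have hcont : ContinuousWithinAt (fun u : ℝ => s (x + u • v)) (Set.Ici 0) 0 :=
    (s.continuous.comp (by continuity)).continuousWithinAt
  have key : ∫ u in Set.Ioi (0:ℝ), g (x + u • v) = 0 - s (x + (0:ℝ) • v) :=
    integral_Ioi_of_hasDerivAt_of_tendsto hcont (fun u _ => hder u) hint htend
  have hsx : s x = - ∫ u in Set.Ioi (0:ℝ), g (x + u • v) := by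
    rw [key]; simp
  calc ENNReal.ofReal ‖s x‖ = ‖∫ u in Set.Ioi (0:ℝ), g (x + u • v)‖ₑ := by
        rw [hsx, norm_neg, ofReal_norm]
  _ ≤ ∫⁻ u in Set.Ioi (0:ℝ), ‖g (x + u • v)‖ₑ := enorm_integral_le_lintegral_enorm _
  _ = ∫⁻ u in Set.Ioi (0:ℝ), ENNReal.ofReal ‖g (x + u • v)‖ := by
        congr 1
        funext u
        rw [← ofReal_norm]

def pdCLM {d : ℕ} (i : Fin d) : SchwartzMap (Ed d) ℂ →L[ℝ] SchwartzMap (Ed d) ℂ :=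
  SchwartzMap.pderivCLM ℝ (EuclideanSpace.single i 1)

def Gl {d : ℕ} (l : List (Fin d)) (s : SchwartzMap (Ed d) ℂ) : SchwartzMap (Ed d) ℂ :=
  l.foldl (fun t i => pdCLM i t) s

lemma coordDeriv_coe {d : ℕ} (i : Fin d) (s : SchwartzMap (Ed d) ℂ) :
    coordDeriv i ⇑s = ⇑(pdCLM i s) := by
  funext η
  simp [coordDeriv, pdCLM, SchwartzMap.pderivCLM_apply]

lemma Gl_coe {d : ℕ} (l : List (Fin d)) (s : SchwartzMap (Ed d) ℂ) :
    ⇑(Gl l s) = l.reverse.foldr coordDeriv ⇑s := by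
  induction l generalizing s with
  | nil => rfl
  | cons i l ih =>
      show ⇑(Gl l (pdCLM i s)) = _
      rw [ih, List.reverse_cons, List.foldr_append]
      simp [coordDeriv_coe]

lemma multiDeriv_ones {d : ℕ} (s : SchwartzMap (Ed d) ℂ) :
    multiDeriv (fun _ => 1) ⇑s = ⇑(Gl (List.finRange d).reverse s) := by
  rw [Gl_coe, List.reverse_reverse]
  unfold multiDeriv
  congr 1
  simp [List.replicate_one]

-- coordinates
lemma add_smul_single_apply {d : ℕ} (x : Ed d) (c : ℝ) (i j : Fin d) :
    (x + c • EuclideanSpace.single i (1:ℝ)) j = x j + (if j = i then c else 0) := by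
  simp [EuclideanSpace.single_apply, mul_ite]

lemma add_single_eq_update {d : ℕ} (x : Ed d) (c : ℝ) (i : Fin d) :
    x + c • EuclideanSpace.single i (1:ℝ) = Function.update x i (x i + c) := by
  funext j
  rw [show (x.ofLp + c • (EuclideanSpace.single i (1:ℝ)).ofLp) j
      = (x + c • EuclideanSpace.single i (1:ℝ)) j from rfl]
  rw [add_smul_single_apply, Function.update_apply]
  by_cases h : j = i
  · subst h; simp
  · simp [h]

lemma norm_le_add_single {d : ℕ} (x : Ed d) (c : ℝ) (i : Fin d) (h : 0 ≤ c * x i) :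
    ‖x‖ ≤ ‖x + c • EuclideanSpace.single i (1:ℝ)‖ := by
  rw [EuclideanSpace.norm_eq, EuclideanSpace.norm_eq]
  apply Real.sqrt_le_sqrt
  apply Finset.sum_le_sum
  intro j _
  rw [add_smul_single_apply]
  by_cases hj : j = i
  · subst hj
    simp only [if_pos rfl, Real.norm_eq_abs, sq_abs, if_true]
    have : (x j + c) ^ 2 = x j ^ 2 + 2 * (c * x j) + c ^ 2 := by ring
    nlinarith [sq_nonneg c]
  · simp [hj]

lemma shift_lintegral_le (c : ℝ) (e : ℝ) (he : e = 1 ∨ e = -1) (g : ℝ → ℝ≥0∞)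
    (hg : Measurable g) :
    ∫⁻ u in Set.Ioi (0:ℝ), g (c + u * e) ≤ ∫⁻ y, g y := by
  refine (setLIntegral_le_lintegral _ _).trans ?_
  rcases he with he | he
  · subst he
    simp only [mul_one]
    exact le_of_eq ((measurePreserving_add_left volume c).lintegral_comp hg)
  · subst he
    have hmp : MeasurePreserving (fun u : ℝ => c + u * (-1)) volume volume := by
      have h1 : MeasurePreserving (fun u : ℝ => -u) (volume : Measure ℝ) volume :=
        Measure.measurePreserving_neg volume
      have h2 := (measurePreserving_add_left (volume : Measure ℝ) c).comp h1
      convert h2 using 1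
      funext u; simp [Function.comp, sub_eq_add_neg]
    exact le_of_eq (hmp.lintegral_comp hg)

lemma keyC {d : ℕ} (W : Ed d → ℝ≥0∞)
    (hWmono : ∀ x y : Ed d, ‖x‖ ≤ ‖y‖ → W x ≤ W y)
    (hWtop : ∀ x, W x ≠ ⊤) (hWmeas : Measurable W)
    (ε : Fin d → ℝ) (hε : ∀ i, ε i = 1 ∨ ε i = -1) :
    ∀ l : List (Fin d), l.Nodup → ∀ (s : SchwartzMap (Ed d) ℂ) (x : Ed d),
      (∀ i ∈ l, 0 ≤ ε i * x i) →
      W x * ENNReal.ofReal ‖s x‖ ≤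
        (∫⋯∫⁻_l.toFinset, (fun η => W (WithLp.toLp 2 η) * ENNReal.ofReal ‖Gl l s (WithLp.toLp 2 η)‖) ∂(fun _ => (volume : Measure ℝ))) x := by
  intro l
  induction l with
  | nil =>
      intro _ s x _
      simp [lmarginal_empty, Gl]
  | cons i l ih =>
      intro hnd s x hx
      obtain ⟨hi, hndl⟩ := List.nodup_cons.mp hnd
      have hεi := hε i
      have hεi1 : |ε i| = 1 := by rcases hεi with h | h <;> simp [h]
      set v : Ed d := ε i • EuclideanSpace.single i (1:ℝ) with hv_def
      have hsingle : (EuclideanSpace.single i (1:ℝ)) ≠ 0 := by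
        intro hcontra
        have := congrFun (congrArg (fun (z : Ed d) => (z : Fin d → ℝ)) hcontra) i
        simp [EuclideanSpace.single_apply] at this
      have hv : v ≠ 0 := smul_ne_zero (by rcases hεi with h | h <;> simp [h]) hsingle
      set F : (Fin d → ℝ) → ℝ≥0∞ := fun η => W (WithLp.toLp 2 η) *
        ENNReal.ofReal ‖Gl (i :: l) s (WithLp.toLp 2 η)‖ with hF
      have hFmeas : Measurable F :=
        (hWmeas.comp (WithLp.measurable_toLp 2 _)).mul
          (((Gl (i :: l) s).continuous.norm.measurable.ennreal_ofReal).comp (WithLp.measurable_toLp 2 _))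
      -- x moved along v
      have hxshift : ∀ u : ℝ, x + u • v = x + (u * ε i) • EuclideanSpace.single i (1:ℝ) := by
        intro u; rw [hv_def, smul_smul]
      have hnormle : ∀ u : ℝ, 0 < u → ‖x‖ ≤ ‖x + u • v‖ := by
        intro u hu
        rw [hxshift]
        apply norm_le_add_single
        have := hx i (List.mem_cons_self)
        have : 0 ≤ u * (ε i * x i) := mul_nonneg hu.le this
        nlinarith
      -- norms of pderiv in direction v vs single
      have hcontv : Continuous fun u : ℝ => x + u • v :=
        continuous_const.add (continuous_id.smul continuous_const)
      have hpd : ∀ y : Ed d, ‖(SchwartzMap.pderivCLM ℝ v s) y‖ = ‖(pdCLM i s) y‖ := by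
        intro y
        have h1 : (SchwartzMap.pderivCLM ℝ v s) y = ε i • (pdCLM i s) y := by
          rw [SchwartzMap.pderivCLM_apply, hv_def, ContinuousLinearMap.map_smul]
          rfl
        rw [h1, norm_smul, Real.norm_eq_abs, hεi1, one_mul]
      -- step 1: FTC + weight monotonicity
      have step1 : W x * ENNReal.ofReal ‖s x‖ ≤
          ∫⁻ u in Set.Ioi (0:ℝ), W (x + u • v) * ENNReal.ofReal ‖(pdCLM i s) (x + u • v)‖ := by
        have h1 := ftc_line s x v hv
        have h2 : W x * ENNReal.ofReal ‖s x‖ ≤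
            W x * ∫⁻ u in Set.Ioi (0:ℝ), ENNReal.ofReal ‖(pdCLM i s) (x + u • v)‖ := by
          refine mul_le_mul_right (h1.trans (le_of_eq ?_)) _
          exact lintegral_congr fun u => by rw [hpd]
        rw [← lintegral_const_mul' _ _ (hWtop x)] at h2
        refine h2.trans ?_
        refine setLIntegral_mono ?_ ?_
        · exact (hWmeas.comp hcontv.measurable).mul
            ((((pdCLM i s).continuous.comp hcontv).norm).measurable.ennreal_ofReal)
        · intro u hu
          exact mul_le_mul_left (hWmono _ _ (hnormle u hu)) _
      -- step 2: apply IH pointwise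
      have step2 : ∀ u : ℝ, 0 < u →
          W (x + u • v) * ENNReal.ofReal ‖(pdCLM i s) (x + u • v)‖ ≤
            (∫⋯∫⁻_l.toFinset, F ∂(fun _ => (volume : Measure ℝ))) (x + u • v) := by
        intro u hu
        have hx' : ∀ j ∈ l, 0 ≤ ε j * (x + u • v) j := by
          intro j hj
          have hji : j ≠ i := fun h => hi (h ▸ hj)
          rw [hxshift, add_smul_single_apply, if_neg hji, add_zero]
          exact hx j (List.mem_cons_of_mem _ hj)
        have := ih hndl (pdCLM i s) (x + u • v) hx'
        exact this
      -- step 3: integrate & absorb into lmarginal over insert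
      have hmeas_marg : Measurable fun y : ℝ =>
          (∫⋯∫⁻_l.toFinset, F ∂(fun _ => (volume : Measure ℝ))) (Function.update x i y) :=
        (Measurable.lmarginal _ hFmeas).comp (measurable_update x)
      have step3 : ∫⁻ u in Set.Ioi (0:ℝ),
            (∫⋯∫⁻_l.toFinset, F ∂(fun _ => (volume : Measure ℝ))) (x + u • v) ≤
          (∫⋯∫⁻_(i :: l).toFinset, F ∂(fun _ => (volume : Measure ℝ))) x := by
        have hrw : ∀ u : ℝ, x.ofLp + u • v.ofLp = Function.update x i (x i + u * ε i) := by
          intro u; rw [← add_single_eq_update, hv_def]; simp only [WithLp.ofLp_smul, smul_smul]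
        have h1 : ∫⁻ u in Set.Ioi (0:ℝ),
              (∫⋯∫⁻_l.toFinset, F ∂(fun _ => (volume : Measure ℝ))) (x + u • v)
            = ∫⁻ u in Set.Ioi (0:ℝ),
              (fun y => (∫⋯∫⁻_l.toFinset, F ∂(fun _ => (volume : Measure ℝ)))
                 (Function.update x i y)) (x i + u * ε i) := by
          exact lintegral_congr fun u => by rw [hrw]
        rw [h1]
        refine (shift_lintegral_le (x i) (ε i) hεi _ hmeas_marg).trans (le_of_eq ?_)
        rw [List.toFinset_cons]
        have hnotmem : i ∉ l.toFinset := by simpa using hi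
        rw [lmarginal_insert F hFmeas hnotmem x]
      -- combine
      refine step1.trans ?_
      refine (setLIntegral_mono ((Measurable.lmarginal _ hFmeas).comp ((WithLp.measurable_ofLp 2 _).comp hcontv.measurable)) ?_).trans step3
      intro u hu
      exact step2 u hu

lemma wA_continuous {d : ℕ} (σ z : ℝ) (k : Fin d → ℤ) : Continuous fun η : Ed d => wA d σ z k η := by
  unfold wA japKV japV
  have h1 : Continuous fun η : Ed d => Real.exp (z * Real.sqrt (1 + ‖toE k‖ ^ 2 + ‖η‖ ^ 2)) := by
    apply Real.continuous_exp.comp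
    exact (continuous_const.mul ((Real.continuous_sqrt).comp
      (by continuity)))
  apply h1.mul
  apply Continuous.rpow_const
  · exact Real.continuous_sqrt.comp (by continuity)
  · intro η
    left
    exact ne_of_gt (Real.sqrt_pos.2 (by positivity))

lemma sob {d : ℕ} (σ z : ℝ) (hσ : 0 ≤ σ) (hz : 0 ≤ z) (k : Fin d → ℤ)
    (s : SchwartzMap (Ed d) ℂ) (x : Ed d) :
    ENNReal.ofReal (wA d σ z k x * ‖s x‖) ≤
      ∫⁻ η, ENNReal.ofReal (wA d σ z k η * ‖multiDeriv (fun _ => 1) (⇑s) η‖) := by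
  set W : Ed d → ℝ≥0∞ := fun η => ENNReal.ofReal (wA d σ z k η) with hW
  have hWmono : ∀ a b : Ed d, ‖a‖ ≤ ‖b‖ → W a ≤ W b :=
    fun a b hab => ENNReal.ofReal_le_ofReal (wA_mono σ z hσ hz k hab)
  have hWtop : ∀ a, W a ≠ ⊤ := fun a => ENNReal.ofReal_ne_top
  have hWmeas : Measurable W := (wA_continuous σ z k).measurable.ennreal_ofReal
  set ε : Fin d → ℝ := fun i => if x i < 0 then -1 else 1 with hε_def
  have hε : ∀ i, ε i = 1 ∨ ε i = -1 := by
    intro i; by_cases h : x i < 0 <;> simp [hε_def, h]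
  set l : List (Fin d) := (List.finRange d).reverse with hl_def
  have hnd : l.Nodup := List.nodup_reverse.2 (List.nodup_finRange d)
  have hx : ∀ i ∈ l, 0 ≤ ε i * x i := by
    intro i _
    by_cases h : x i < 0
    · simp only [hε_def, if_pos h]; nlinarith
    · simp only [hε_def, if_neg h]; push_neg at h; linarith
  have key := keyC W hWmono hWtop hWmeas ε hε l hnd s x hx
  have hfin : l.toFinset = Finset.univ := by
    rw [hl_def, List.toFinset_reverse, List.toFinset_finRange]
  rw [hfin] at key
  rw [lmarginal_univ] at key
  set F : (Fin d → ℝ) → ℝ≥0∞ := fun η => W (WithLp.toLp 2 η) *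
    ENNReal.ofReal ‖Gl l s (WithLp.toLp 2 η)‖ with hFdef
  have hFmeas : Measurable F := (hWmeas.comp (WithLp.measurable_toLp 2 _)).mul
    (((Gl l s).continuous.norm.measurable.ennreal_ofReal).comp (WithLp.measurable_toLp 2 _))
  have transfer : ∫⁻ y : Fin d → ℝ, F y ∂(Measure.pi fun _ => volume) = ∫⁻ η : Ed d, F η.ofLp := by
    rw [← volume_pi]
    have := (PiLp.volume_preserving_ofLp (Fin d)).lintegral_comp hFmeas
    exact this.symm
  rw [transfer] at key
  calc ENNReal.ofReal (wA d σ z k x * ‖s x‖)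
      = W x * ENNReal.ofReal ‖s x‖ := by
        rw [hW, ENNReal.ofReal_mul (wA_pos σ z k x).le]
  _ ≤ ∫⁻ η : Ed d, F η.ofLp := key
  _ = ∫⁻ η, ENNReal.ofReal (wA d σ z k η * ‖multiDeriv (fun _ => 1) (⇑s) η‖) := by
        apply lintegral_congr
        intro η
        show ENNReal.ofReal (wA d σ z k η) * ENNReal.ofReal ‖Gl l s η‖ = _
        rw [multiDeriv_ones, ← ENNReal.ofReal_mul (wA_pos σ z k η).le]

lemma one_le_norm_toE {d : ℕ} (k : Fin d → ℤ) (hk : k ≠ 0) : 1 ≤ ‖toE k‖ := by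
  obtain ⟨i, hki⟩ := Function.ne_iff.mp hk
  have h1 : (1:ℝ) ≤ ‖(toE k) i‖ ^ 2 := by
    have : (1:ℤ) ≤ |k i| := Int.one_le_abs (by simpa using hki)
    have h2 : (1:ℝ) ≤ |(k i : ℝ)| := by exact_mod_cast this
    rw [show (toE k).ofLp i = (k i : ℝ) from rfl]
    rw [Real.norm_eq_abs]
    nlinarith
  rw [EuclideanSpace.norm_eq]
  rw [show (1:ℝ) = Real.sqrt 1 by simp]
  apply Real.sqrt_le_sqrt
  calc (1:ℝ) ≤ ‖(toE k) i‖ ^ 2 := h1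
  _ ≤ ∑ j, ‖(toE k) j‖ ^ 2 :=
      Finset.single_le_sum (f := fun j => ‖(toE k) j‖ ^ 2) (fun j _ => by positivity)
        (Finset.mem_univ i)

lemma jap_nonneg (t : ℝ) : 0 ≤ jap t := Real.sqrt_nonneg _

lemma jap_le_japKV {d : ℕ} (k : Fin d → ℤ) (hk : k ≠ 0) (t : ℝ) (ht : 0 ≤ t) :
    jap t ≤ japKV k (t • toE k) := by
  have hk1 := one_le_norm_toE k hk
  have hn : ‖t • toE k‖ = t * ‖toE k‖ := by
    rw [norm_smul, Real.norm_eq_abs, abs_of_nonneg ht]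
  unfold jap japKV
  apply Real.sqrt_le_sqrt
  rw [hn]
  have hk2 : 1 ≤ ‖toE k‖ ^ 2 := by nlinarith
  have ht2 : 0 ≤ t ^ 2 := sq_nonneg t
  have : t ^ 2 * 1 ≤ t ^ 2 * ‖toE k‖ ^ 2 := mul_le_mul_of_nonneg_left hk2 ht2
  nlinarith

lemma coef_bound {d : ℕ} (σ lam0 δ : ℝ) (hσ : 0 ≤ σ) (hl : 0 < lam0)
    (hδ0 : 0 < δ) (hδ1 : δ < 1) (k : Fin d → ℤ) (hk : k ≠ 0) (t : ℝ) (ht : 0 ≤ t) :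
    wA d σ (lam lam0 δ t) k (t • toE k) ≤
      (Real.exp (2 * (lam0 * (1 - (2:ℝ) ^ (-δ)))) *
        Real.exp (-(lam0 * (1 - (2:ℝ) ^ (-δ))) * jap t)) * wA d σ (2 * lam0) k (t • toE k) := by
  set θ := lam0 * (1 - (2:ℝ) ^ (-δ)) with hθ
  have h2d : (2:ℝ) ^ (-δ) < 1 :=
    Real.rpow_lt_one_of_one_lt_of_neg one_lt_two (by linarith)
  have hθpos : 0 < θ := by
    rw [hθ]; apply mul_pos hl; linarith
  set J := japKV k (t • toE k) with hJdef
  have hJ0 : 0 ≤ J := Real.sqrt_nonneg _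
  have hJt : jap t ≤ J := jap_le_japKV k hk t ht
  set r := (1 + t) ^ (-δ) with hr
  have hr1 : r ≤ 1 := Real.rpow_le_one_of_one_le_of_nonpos (by linarith) (by linarith)
  have hr0 : 0 < r := Real.rpow_pos_of_pos (by linarith) _
  have hmain : θ * jap t + lam lam0 δ t * J ≤ 2 * θ + 2 * lam0 * J := by
    have hlam : lam lam0 δ t = lam0 * (1 + r) := rfl
    rcases le_or_gt t 1 with h1 | h1
    · have hjap2 : jap t ≤ 2 := by
        unfold jap
        rw [show (2:ℝ) = Real.sqrt 4 by rw [show (4:ℝ) = 2^2 by norm_num, Real.sqrt_sq]; norm_num]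
        apply Real.sqrt_le_sqrt; nlinarith
      have h2 : θ * jap t ≤ 2 * θ := by nlinarith [jap_nonneg t]
      have h3 : lam lam0 δ t * J ≤ 2 * lam0 * J := by
        rw [hlam]
        have : lam0 * (1 + r) ≤ 2 * lam0 := by nlinarith
        exact mul_le_mul_of_nonneg_right this hJ0
      linarith
    · have hr2 : r ≤ (2:ℝ) ^ (-δ) := by
        rw [hr]
        apply Real.rpow_le_rpow_of_nonpos (by norm_num) (by linarith) (by linarith)
      have h4 : θ ≤ 2 * lam0 - lam lam0 δ t := by
        rw [hlam, hθ]; nlinarith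
      have h5 : θ * jap t ≤ (2 * lam0 - lam lam0 δ t) * J :=
        mul_le_mul h4 hJt (jap_nonneg t) (by linarith [hθpos])
      nlinarith [h5]
  unfold wA
  rw [← hJdef]
  have hP : (0:ℝ) ≤ japV (t • toE k) ^ σ := Real.rpow_nonneg (japV_pos _).le _
  have hexp : Real.exp (lam lam0 δ t * J) ≤
      (Real.exp (2 * θ) * Real.exp (-θ * jap t)) * Real.exp (2 * lam0 * J) := by
    rw [← Real.exp_add, ← Real.exp_add]
    apply Real.exp_le_exp.2
    linarith
  calc Real.exp (lam lam0 δ t * J) * japV (t • toE k) ^ σ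
      ≤ ((Real.exp (2 * θ) * Real.exp (-θ * jap t)) * Real.exp (2 * lam0 * J)) * japV (t • toE k) ^ σ :=
        mul_le_mul_of_nonneg_right hexp hP
  _ = (Real.exp (2 * θ) * Real.exp (-θ * jap t)) * (Real.exp (2 * lam0 * J) * japV (t • toE k) ^ σ) := by
        ring

/-- decay of the free electric field: with
`ε₀ = Σ_{|α|≤d} Σ_k ∫ A_{k,η}(2λ₀)|∂^α_η h(k,η)| dη` finite, one has
`Σ_{k≠0} |k|^{-1} A_{k,kt}(λ(t)) |h(k,kt)| ≤ C ε₀ e^{-θ₁⟨t⟩}` for all `t ≥ 0`. -/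
theorem free_field_decay (d : ℕ) (hd : 1 ≤ d) (σ lam0 δ : ℝ)
    (hσ : 0 ≤ σ) (hl : 0 < lam0) (hδ0 : 0 < δ) (hδ1 : δ < 1) :
    ∃ θ₁ > (0:ℝ), ∃ C > (0:ℝ),
      ∀ h : (Fin d → ℤ) → SchwartzMap (Ed d) ℂ,
      (∑' (α : MIdx d) (k : Fin d → ℤ),
          ∫⁻ η, ENNReal.ofReal (wA d σ (2 * lam0) k η * ‖multiDeriv α.1 (⇑(h k)) η‖)) ≠ ⊤ →
      ∀ t : ℝ, 0 ≤ t →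
        (∑' k : {k : Fin d → ℤ // k ≠ 0},
            ENNReal.ofReal (‖toE k.1‖⁻¹ * wA d σ (lam lam0 δ t) k.1 (t • toE k.1) *
              ‖h k.1 (t • toE k.1)‖)) ≤
          ENNReal.ofReal (C * Real.exp (-θ₁ * jap t)) *
            ∑' (α : MIdx d) (k : Fin d → ℤ),
              ∫⁻ η, ENNReal.ofReal (wA d σ (2 * lam0) k η * ‖multiDeriv α.1 (⇑(h k)) η‖) := by
  set θ : ℝ := lam0 * (1 - (2:ℝ) ^ (-δ)) with hθ
  have h2d : (2:ℝ) ^ (-δ) < 1 :=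
    Real.rpow_lt_one_of_one_lt_of_neg one_lt_two (by linarith)
  have hθpos : 0 < θ := by rw [hθ]; apply mul_pos hl; linarith
  refine ⟨θ, hθpos, Real.exp (2 * θ), Real.exp_pos _, fun h _ t ht => ?_⟩
  set S : (Fin d → ℤ) → ℝ≥0∞ := fun k =>
    ∫⁻ η, ENNReal.ofReal (wA d σ (2 * lam0) k η * ‖multiDeriv (fun _ => 1) (⇑(h k)) η‖)
    with hS
  set Ce : ℝ := Real.exp (2 * θ) * Real.exp (-θ * jap t) with hCe
  have hCe0 : 0 ≤ Ce := by positivity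
  -- pointwise bound
  have hterm : ∀ k : {k : Fin d → ℤ // k ≠ 0},
      ENNReal.ofReal (‖toE k.1‖⁻¹ * wA d σ (lam lam0 δ t) k.1 (t • toE k.1) *
        ‖h k.1 (t • toE k.1)‖) ≤ ENNReal.ofReal Ce * S k.1 := by
    rintro ⟨k, hk⟩
    set x : Ed d := t • toE k
    have hk1 := one_le_norm_toE k hk
    have hinv : ‖toE k‖⁻¹ ≤ 1 := inv_le_one_of_one_le₀ hk1
    have hw := (wA_pos σ (lam lam0 δ t) k x).le
    have hn : (0:ℝ) ≤ ‖h k x‖ := norm_nonneg _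
    have step1 : ‖toE k‖⁻¹ * wA d σ (lam lam0 δ t) k x * ‖h k x‖ ≤
        wA d σ (lam lam0 δ t) k x * ‖h k x‖ := by
      have := mul_le_of_le_one_left hw hinv
      exact mul_le_mul_of_nonneg_right this hn
    have step2 : wA d σ (lam lam0 δ t) k x * ‖h k x‖ ≤
        Ce * (wA d σ (2 * lam0) k x * ‖h k x‖) := by
      have hc := coef_bound σ lam0 δ hσ hl hδ0 hδ1 k hk t ht
      rw [hCe]
      calc wA d σ (lam lam0 δ t) k x * ‖h k x‖
          ≤ ((Real.exp (2 * θ) * Real.exp (-θ * jap t)) * wA d σ (2 * lam0) k x) * ‖h k x‖ :=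
            mul_le_mul_of_nonneg_right hc hn
      _ = (Real.exp (2 * θ) * Real.exp (-θ * jap t)) * (wA d σ (2 * lam0) k x * ‖h k x‖) := by
            ring
    calc ENNReal.ofReal (‖toE k‖⁻¹ * wA d σ (lam lam0 δ t) k x * ‖h k x‖)
        ≤ ENNReal.ofReal (Ce * (wA d σ (2 * lam0) k x * ‖h k x‖)) :=
          ENNReal.ofReal_le_ofReal (step1.trans step2)
    _ = ENNReal.ofReal Ce * ENNReal.ofReal (wA d σ (2 * lam0) k x * ‖h k x‖) :=
          ENNReal.ofReal_mul hCe0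
    _ ≤ ENNReal.ofReal Ce * S k :=
          mul_le_mul_right (sob σ (2 * lam0) hσ (by linarith) k (h k) x) _
  refine (ENNReal.tsum_le_tsum hterm).trans ?_
  rw [ENNReal.tsum_mul_left]
  have hsub : (∑' k : {k : Fin d → ℤ // k ≠ 0}, S k.1) ≤ ∑' k : Fin d → ℤ, S k :=
    ENNReal.tsum_comp_le_tsum_of_injective Subtype.coe_injective S
  have hα : (∑' k : Fin d → ℤ, S k) ≤
      ∑' (α : MIdx d) (k : Fin d → ℤ),
        ∫⁻ η, ENNReal.ofReal (wA d σ (2 * lam0) k η * ‖multiDeriv α.1 (⇑(h k)) η‖) := by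
    have hα₀ : (∑ i : Fin d, (1:ℕ)) ≤ d := by simp
    exact ENNReal.le_tsum (⟨fun _ => 1, hα₀⟩ : MIdx d)
  have hC : ENNReal.ofReal Ce =
      ENNReal.ofReal (Real.exp (2 * θ) * Real.exp (-θ * jap t)) := rfl
  exact mul_le_mul hC.le (hsub.trans hα) zero_le zero_le
end
end
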